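/- Let M be a finite labeled transition system over label set S, let f₁,…,f_d be DFAs over S, and for each i let ξ_i and v_i be the recurrence matrix and initial condition vector of the synchronous product M‖f_i. Let d' ∈ ℕ, let @ be a function from multisets over ℕ^d to ℚ^{d'}, let h : ℕ^d → ℚ^{d'}, and let Ψ be a predicate on multisets over ℕ^d. Assume: (i) for every multiset X over ℕ^d, if Ψ(X) holds then @(X) = h(Σ₁X,…,Σ_dX); and (ii) for every n ≥ 0, Ψ holds of the multiset img_f(M,n) over ℕ^d in which the tuple (f₁(w),…,f_d(w)) occurs with multiplicity mult_M(w) for each word w of length n. Then for every n ≥ 0, @(img_f(M,n)) = h((ξ₁^{n+1}v₁)₀,…,(ξ_d^{n+1}v_d)₀), where (u)₀ denotes the first entry of a vector; consequently, for any L ∈ ℝ^{d'}, the sequence n ↦ @(img_f(M,n)) tends to L as n → ∞ if and only if the sequence n ↦ h((ξ₁^{n+1}v₁)₀,…,(ξ_d^{n+1}v_d)₀) tends to L. -/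

import Mathlib

open scoped Classical

/-- A finite labeled transition system: a set of initial states and a transition relation. -/
structure LTS (Q S : Type*) where
  init : Set Q
  trans : Set (Q × S × Q)

/-- A deterministic finite automaton over labels `S` with states `R`. -/
structure DFAc (S R : Type*) where
  start : R
  accept : Set R
  step : R → S → R

variable {Q S : Type*} [Fintype Q] [Fintype S]

/-- The finite set of paths of length `n` of an LTS. -/
noncomputable def pathFinset (M : LTS Q S) (n : ℕ) :
    Finset ((Fin (n + 1) → Q) × (Fin n → S)) :=
  Finset.univ.filter (fun p =>
    p.1 0 ∈ M.init ∧ ∀ i : Fin n, (p.1 i.castSucc, p.2 i, p.1 i.succ) ∈ M.trans)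

/-- `alpha M Acc n q`: total accepting-state visits over paths of length `n` ending in `q`. -/
noncomputable def alpha (M : LTS Q S) (Acc : Set Q) (n : ℕ) (q : Q) : ℕ :=
  ∑ p ∈ (pathFinset M n).filter (fun p => p.1 (Fin.last n) = q),
    (Finset.univ.filter (fun i : Fin (n + 1) => p.1 i ∈ Acc)).card

/-- The predecessor matrix of an LTS. -/
noncomputable def predMatrix (M : LTS Q S) : Matrix Q Q ℕ :=
  fun i j => (Finset.univ.filter (fun a : S => (j, a, i) ∈ M.trans)).card

/-- The accepting matrix of an LTS with accepting set `Acc`. -/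
noncomputable def accMatrix (M : LTS Q S) (Acc : Set Q) : Matrix Q Q ℕ :=
  fun i j => if i ∈ Acc then predMatrix M i j else 0

/-- The recurrence matrix `ξ = [[0, 1ᵀ, 0ᵀ], [0, D, A], [0, 0, D]]`, indexed by
`Unit ⊕ Q ⊕ Q`. -/
noncomputable def xi (M : LTS Q S) (Acc : Set Q) :
    Matrix (Unit ⊕ Q ⊕ Q) (Unit ⊕ Q ⊕ Q) ℕ := fun i j =>
  match i, j with
  | Sum.inl _, Sum.inr (Sum.inl _) => 1
  | Sum.inr (Sum.inl i'), Sum.inr (Sum.inl j') => predMatrix M i' j'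
  | Sum.inr (Sum.inl i'), Sum.inr (Sum.inr j') => accMatrix M Acc i' j'
  | Sum.inr (Sum.inr i'), Sum.inr (Sum.inr j') => predMatrix M i' j'
  | _, _ => 0

/-- The initial condition vector `v = (0, α⃗₀, β⃗₀)`. -/
noncomputable def initVec (M : LTS Q S) (Acc : Set Q) : (Unit ⊕ Q ⊕ Q) → ℕ :=
  Sum.elim (fun _ => 0)
    (Sum.elim (fun q => if q ∈ M.init ∧ q ∈ Acc then 1 else 0)
      (fun q => if q ∈ M.init then 1 else 0))

/-- `mult M n w`: the multiplicity of the word `w` of length `n` in `M`. -/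
noncomputable def mult (M : LTS Q S) (n : ℕ) (w : Fin n → S) : ℕ :=
  (Finset.univ.filter (fun qh : Fin (n + 1) → Q =>
    qh 0 ∈ M.init ∧ ∀ i : Fin n, (qh i.castSucc, w i, qh i.succ) ∈ M.trans)).card

/-- The state visited by the DFA `f` after consuming the first `i` letters of `w`. -/
def dfaState {S R : Type*} (f : DFAc S R) {n : ℕ} (w : Fin n → S) (i : Fin (n + 1)) : R :=
  ((List.ofFn w).take i.val).foldl f.step f.start

/-- `dfaCount f w` = number of accepting states visited by `f` while consuming `w`. -/
noncomputable def dfaCount {S R : Type*} (f : DFAc S R) {n : ℕ} (w : Fin n → S) : ℕ :=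
  (Finset.univ.filter (fun i : Fin (n + 1) => dfaState f w i ∈ f.accept)).card

/-- The synchronous product `M ‖ f` of an LTS and a DFA. -/
def prodLTS {Q S R : Type*} (M : LTS Q S) (f : DFAc S R) : LTS (Q × R) S where
  init := {qr | qr.1 ∈ M.init ∧ qr.2 = f.start}
  trans := {t | (t.1.1, t.2.1, t.2.2.1) ∈ M.trans ∧ f.step t.1.2 t.2.1 = t.2.2.2}

/-- `imgF M fs n` is the multiset over `ℕ^d` in which the tuple `(f₁(w), …, f_d(w))`
occurs with multiplicity `mult_M(w)`, for each word `w` of length `n`. -/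
noncomputable def imgF {d : ℕ} {R : Fin d → Type*} (M : LTS Q S)
    (fs : ∀ i, DFAc S (R i)) (n : ℕ) : Multiset (Fin d → ℕ) :=
  ∑ w : Fin n → S, Multiset.replicate (mult M n w) (fun i => dfaCount (fs i) w)


section Aux

open scoped Classical

/-- Number of paths of length `n` ending at `q`. -/
noncomputable def betaVec (M : LTS Q S) (n : ℕ) (q : Q) : ℕ :=
  ((pathFinset M n).filter (fun p => p.1 (Fin.last n) = q)).card

lemma snoc_zero' {α : Type*} {n : ℕ} (qh : Fin (n + 1) → α) (q : α) :
    (Fin.snoc qh q : Fin (n + 2) → α) 0 = qh 0 := by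
  rw [← Fin.castSucc_zero, Fin.snoc_castSucc]

lemma path_cond_snoc (M : LTS Q S) {n : ℕ} (qh : Fin (n + 1) → Q) (w : Fin n → S)
    (q : Q) (a : S) :
    ((Fin.snoc qh q : Fin (n + 2) → Q) 0 ∈ M.init ∧
      ∀ i : Fin (n + 1),
        ((Fin.snoc qh q : Fin (n + 2) → Q) i.castSucc, (Fin.snoc w a : Fin (n + 1) → S) i,
          (Fin.snoc qh q : Fin (n + 2) → Q) i.succ) ∈ M.trans)
    ↔ ((qh 0 ∈ M.init ∧ ∀ i : Fin n, (qh i.castSucc, w i, qh i.succ) ∈ M.trans)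
        ∧ (qh (Fin.last n), a, q) ∈ M.trans) := by
  rw [Fin.forall_fin_succ', snoc_zero']
  constructor
  · rintro ⟨h0, h1, h2⟩
    refine ⟨⟨h0, fun i => ?_⟩, ?_⟩
    · have := h1 i
      simpa [Fin.succ_castSucc, -Fin.castSucc_succ] using this
    · simpa [Fin.succ_last] using h2
  · rintro ⟨⟨h0, h1⟩, h2⟩
    refine ⟨h0, fun i => ?_, ?_⟩
    · have := h1 i
      simpa [Fin.succ_castSucc, -Fin.castSucc_succ] using this
    · simpa [Fin.succ_last] using h2

/-- The equivalence separating the last step of a path. -/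
def snocPairEquiv (Q S : Type*) (n : ℕ) :
    (((Fin (n + 1) → Q) × (Fin n → S)) × Q × S) ≃ ((Fin (n + 2) → Q) × (Fin (n + 1) → S)) where
  toFun x := (Fin.snoc x.1.1 x.2.1, Fin.snoc x.1.2 x.2.2)
  invFun p := ((Fin.init p.1, Fin.init p.2), p.1 (Fin.last (n + 1)), p.2 (Fin.last n))
  left_inv := by rintro ⟨⟨qh, w⟩, q, a⟩; simp
  right_inv := by rintro ⟨qh, w⟩; simp

lemma path_sum_decomp (M : LTS Q S) (n : ℕ)
    (F : ((Fin (n + 2) → Q) × (Fin (n + 1) → S)) → ℕ) :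
    ∑ p ∈ pathFinset M (n + 1), F p
      = ∑ p ∈ pathFinset M n, ∑ q : Q, ∑ a : S,
          if (p.1 (Fin.last n), a, q) ∈ M.trans
          then F (Fin.snoc p.1 q, Fin.snoc p.2 a) else 0 := by
  calc ∑ p ∈ pathFinset M (n + 1), F p
      = ∑ x : ((Fin (n + 1) → Q) × (Fin n → S)) × Q × S,
          if ((snocPairEquiv Q S n x).1 0 ∈ M.init ∧
              ∀ i : Fin (n + 1),
                ((snocPairEquiv Q S n x).1 i.castSucc, (snocPairEquiv Q S n x).2 i,
                  (snocPairEquiv Q S n x).1 i.succ) ∈ M.trans)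
          then F (snocPairEquiv Q S n x) else 0 := by
        rw [pathFinset, Finset.sum_filter]
        exact (Equiv.sum_comp (snocPairEquiv Q S n)
          (fun p => if (p.1 0 ∈ M.init ∧
              ∀ i : Fin (n + 1), (p.1 i.castSucc, p.2 i, p.1 i.succ) ∈ M.trans)
            then F p else 0)).symm
    _ = ∑ x : ((Fin (n + 1) → Q) × (Fin n → S)) × Q × S,
          if ((x.1.1 0 ∈ M.init ∧ ∀ i : Fin n, (x.1.1 i.castSucc, x.1.2 i, x.1.1 i.succ) ∈ M.trans)
              ∧ (x.1.1 (Fin.last n), x.2.2, x.2.1) ∈ M.trans)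
          then F (Fin.snoc x.1.1 x.2.1, Fin.snoc x.1.2 x.2.2) else 0 := by
        refine Finset.sum_congr rfl fun x _ => ?_
        rcases x with ⟨⟨qh, w⟩, q, a⟩
        exact if_congr (path_cond_snoc M qh w q a) rfl rfl
    _ = ∑ x1 : (Fin (n + 1) → Q) × (Fin n → S), ∑ y : Q × S,
          if ((x1.1 0 ∈ M.init ∧ ∀ i : Fin n, (x1.1 i.castSucc, x1.2 i, x1.1 i.succ) ∈ M.trans)
              ∧ (x1.1 (Fin.last n), y.2, y.1) ∈ M.trans)
          then F (Fin.snoc x1.1 y.1, Fin.snoc x1.2 y.2) else 0 := by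
        rw [Fintype.sum_prod_type]
    _ = ∑ p ∈ pathFinset M n, ∑ q : Q, ∑ a : S,
          if (p.1 (Fin.last n), a, q) ∈ M.trans
          then F (Fin.snoc p.1 q, Fin.snoc p.2 a) else 0 := by
        rw [pathFinset, Finset.sum_filter]
        refine Finset.sum_congr rfl fun x1 _ => ?_
        by_cases hc : x1.1 0 ∈ M.init ∧
            ∀ i : Fin n, (x1.1 i.castSucc, x1.2 i, x1.1 i.succ) ∈ M.trans
        · simp [hc, Fintype.sum_prod_type]
        · simp [hc]

lemma sum_ite_and_eq {P : Q → Prop} (q : Q) (g : Q → ℕ) :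
    (∑ q' : Q, if P q' ∧ q' = q then g q' else 0) = if P q then g q else 0 := by
  have h : ∀ q' : Q, (if P q' ∧ q' = q then g q' else 0)
      = if q' = q then (if P q' then g q' else 0) else 0 := fun q' => by
    by_cases h1 : q' = q <;> by_cases h2 : P q' <;> simp [h1, h2]
  simp_rw [h, Finset.sum_ite_eq']
  simp

/-- constant-tuple equivalence -/
def constEquiv (Q : Type*) : Q ≃ (Fin 1 → Q) :=
  ⟨fun q _ => q, fun f => f 0, fun _ => rfl,
    fun f => funext fun i => by rw [Subsingleton.elim i 0]⟩

lemma betaVec_zero (M : LTS Q S) (q : Q) :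
    betaVec M 0 q = if q ∈ M.init then 1 else 0 := by
  rw [betaVec, pathFinset, Finset.filter_filter, Finset.card_filter, Fintype.sum_prod_type,
    ← Equiv.sum_comp (constEquiv Q)]
  simp only [constEquiv, Equiv.coe_fn_mk]
  refine Eq.trans (Finset.sum_congr rfl fun x _ => ?_) (sum_ite_and_eq q (fun _ => 1))
  simp

lemma alpha_zero (M : LTS Q S) (Acc : Set Q) (q : Q) :
    alpha M Acc 0 q = if q ∈ M.init ∧ q ∈ Acc then 1 else 0 := by
  rw [alpha, pathFinset, Finset.filter_filter, Finset.sum_filter, Fintype.sum_prod_type,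
    ← Equiv.sum_comp (constEquiv Q)]
  simp only [constEquiv, Equiv.coe_fn_mk]
  refine Eq.trans (Finset.sum_congr rfl fun x _ => ?_)
    (Eq.trans (sum_ite_and_eq (P := fun q' => q' ∈ M.init) q (fun q' => if q' ∈ Acc then 1 else 0)) ?_)
  · by_cases h2 : x ∈ Acc <;> simp [h2, Finset.filter_const]
  · by_cases h1 : q ∈ M.init <;> by_cases h2 : q ∈ Acc <;> simp [h1, h2]


lemma sum_path_fiberwise (M : LTS Q S) (n : ℕ) (G : Q → ℕ)
    (H : ((Fin (n + 1) → Q) × (Fin n → S)) → ℕ) :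
    ∑ p ∈ pathFinset M n, G (p.1 (Fin.last n)) * H p
      = ∑ q' : Q, G q' *
          ∑ p ∈ (pathFinset M n).filter (fun p => p.1 (Fin.last n) = q'), H p := by
  rw [← Finset.sum_fiberwise (pathFinset M n) (fun p => p.1 (Fin.last n))
    (fun p => G (p.1 (Fin.last n)) * H p)]
  refine Finset.sum_congr rfl fun q' _ => ?_
  rw [Finset.mul_sum]
  refine Finset.sum_congr rfl fun p hp => ?_
  rw [(Finset.mem_filter.1 hp).2]

lemma betaVec_succ (M : LTS Q S) (n : ℕ) (q : Q) :
    betaVec M (n + 1) q = ∑ q' : Q, predMatrix M q q' * betaVec M n q' := by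
  rw [betaVec, Finset.card_filter,
    path_sum_decomp M n (fun p => if p.1 (Fin.last (n + 1)) = q then 1 else 0)]
  have h : ∀ p ∈ pathFinset M n, (∑ q'' : Q, ∑ a : S,
      if (p.1 (Fin.last n), a, q'') ∈ M.trans then
        (if (Fin.snoc p.1 q'' : Fin (n + 2) → Q) (Fin.last (n + 1)) = q then 1 else 0)
      else 0)
      = predMatrix M q (p.1 (Fin.last n)) * 1 := by
    intro p _
    simp only [Fin.snoc_last, mul_one]
    have h2 : ∀ q'' : Q, (∑ a : S,
        if (p.1 (Fin.last n), a, q'') ∈ M.trans then (if q'' = q then 1 else 0) else 0)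
        = if q'' = q then
            (∑ a : S, if (p.1 (Fin.last n), a, q'') ∈ M.trans then 1 else 0) else 0 := by
      intro q''
      by_cases hq : q'' = q <;> simp [hq]
    rw [Finset.sum_congr rfl fun q'' _ => h2 q'', Finset.sum_ite_eq']
    simp only [Finset.mem_univ, if_true]
    rw [predMatrix, Finset.card_filter]
  rw [Finset.sum_congr rfl h, sum_path_fiberwise M n (predMatrix M q) (fun _ => 1)]
  refine Finset.sum_congr rfl fun q' _ => ?_
  rw [betaVec, Finset.sum_const, smul_eq_mul, mul_one]

lemma vis_snoc (Acc : Set Q) {n : ℕ} (qh : Fin (n + 1) → Q) (q'' : Q) :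
    (Finset.univ.filter (fun i : Fin (n + 2) =>
        (Fin.snoc qh q'' : Fin (n + 2) → Q) i ∈ Acc)).card
      = (Finset.univ.filter (fun i : Fin (n + 1) => qh i ∈ Acc)).card
        + (if q'' ∈ Acc then 1 else 0) := by
  rw [Finset.card_filter, Finset.card_filter, Fin.sum_univ_castSucc]
  simp

lemma alpha_succ (M : LTS Q S) (Acc : Set Q) (n : ℕ) (q : Q) :
    alpha M Acc (n + 1) q
      = (∑ q' : Q, predMatrix M q q' * alpha M Acc n q')
        + ∑ q' : Q, accMatrix M Acc q q' * betaVec M n q' := by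
  rw [alpha, Finset.sum_filter,
    path_sum_decomp M n (fun p => if p.1 (Fin.last (n + 1)) = q then
      (Finset.univ.filter (fun i : Fin (n + 2) => p.1 i ∈ Acc)).card else 0)]
  have h : ∀ p ∈ pathFinset M n, (∑ q'' : Q, ∑ a : S,
      if (p.1 (Fin.last n), a, q'') ∈ M.trans then
        (if (Fin.snoc p.1 q'' : Fin (n + 2) → Q) (Fin.last (n + 1)) = q then
          (Finset.univ.filter (fun i : Fin (n + 2) =>
            (Fin.snoc p.1 q'' : Fin (n + 2) → Q) i ∈ Acc)).card else 0)
      else 0)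
      = predMatrix M q (p.1 (Fin.last n)) *
          (Finset.univ.filter (fun i : Fin (n + 1) => p.1 i ∈ Acc)).card
        + accMatrix M Acc q (p.1 (Fin.last n)) * 1 := by
    intro p _
    simp only [Fin.snoc_last, vis_snoc Acc p.1]
    have h2 : ∀ q'' : Q, (∑ a : S,
        if (p.1 (Fin.last n), a, q'') ∈ M.trans then
          (if q'' = q then
            (Finset.univ.filter (fun i : Fin (n + 1) => p.1 i ∈ Acc)).card
              + (if q'' ∈ Acc then 1 else 0) else 0)
        else 0)
        = if q'' = q then
            (∑ a : S, if (p.1 (Fin.last n), a, q'') ∈ M.trans then 1 else 0)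
              * ((Finset.univ.filter (fun i : Fin (n + 1) => p.1 i ∈ Acc)).card
                  + (if q'' ∈ Acc then 1 else 0))
          else 0 := by
      intro q''
      by_cases hq : q'' = q
      · subst hq
        simp only [eq_self_iff_true, if_true]
        rw [Finset.sum_mul]
        refine Finset.sum_congr rfl fun a _ => ?_
        by_cases hB : (p.1 (Fin.last n), a, q'') ∈ M.trans <;> simp [hB]
      · simp [hq]
    rw [Finset.sum_congr rfl fun q'' _ => h2 q'', Finset.sum_ite_eq']
    have hpm : (∑ a : S, if (p.1 (Fin.last n), a, q) ∈ M.trans then 1 else 0)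
        = predMatrix M q (p.1 (Fin.last n)) := by
      rw [predMatrix, Finset.card_filter]
    simp only [Finset.mem_univ, if_true, hpm, mul_add, mul_one]
    rw [accMatrix, mul_ite, mul_one, mul_zero]
  rw [Finset.sum_congr rfl h, Finset.sum_add_distrib,
    sum_path_fiberwise M n (predMatrix M q)
      (fun p => (Finset.univ.filter (fun i : Fin (n + 1) => p.1 i ∈ Acc)).card),
    sum_path_fiberwise M n (accMatrix M Acc q) (fun _ => 1)]
  congr 1
  refine Finset.sum_congr rfl fun q' _ => ?_
  rw [betaVec, Finset.sum_const, smul_eq_mul, mul_one]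


lemma xi_mulVec (M : LTS Q S) (Acc : Set Q) (u : (Unit ⊕ Q ⊕ Q) → ℕ) :
    (xi M Acc).mulVec u
      = Sum.elim (fun _ => ∑ q : Q, u (Sum.inr (Sum.inl q)))
          (Sum.elim
            (fun q => (∑ q' : Q, predMatrix M q q' * u (Sum.inr (Sum.inl q')))
              + ∑ q' : Q, accMatrix M Acc q q' * u (Sum.inr (Sum.inr q')))
            (fun q => ∑ q' : Q, predMatrix M q q' * u (Sum.inr (Sum.inr q')))) := by
  funext i
  rcases i with _ | q | q <;>
    simp [Matrix.mulVec, dotProduct, Fintype.sum_sum_type, xi]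

lemma xi_pow_mulVec (M : LTS Q S) (Acc : Set Q) (n : ℕ) :
    (xi M Acc ^ n).mulVec (initVec M Acc)
      = Sum.elim (fun _ => if n = 0 then 0 else ∑ q : Q, alpha M Acc (n - 1) q)
          (Sum.elim (alpha M Acc n) (betaVec M n)) := by
  induction n with
  | zero =>
    rw [pow_zero, Matrix.one_mulVec]
    funext i
    rcases i with _ | q | q
    · rfl
    · simp [initVec, alpha_zero]
    · simp [initVec, betaVec_zero]
  | succ n ih =>
    rw [pow_succ', ← Matrix.mulVec_mulVec, ih, xi_mulVec]
    funext i
    rcases i with _ | q | q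
    · simp
    · simp [alpha_succ]
    · simp [betaVec_succ]

lemma xi_top (M : LTS Q S) (Acc : Set Q) (n : ℕ) :
    (xi M Acc ^ (n + 1)).mulVec (initVec M Acc) (Sum.inl ())
      = ∑ q : Q, alpha M Acc n q := by
  rw [xi_pow_mulVec]
  simp


lemma dfaState_zero {R : Type*} (f : DFAc S R) {n : ℕ} (w : Fin n → S) :
    dfaState f w 0 = f.start := by
  simp [dfaState]

lemma dfaState_succ {R : Type*} (f : DFAc S R) {n : ℕ} (w : Fin n → S) (i : Fin n) :
    dfaState f w i.succ = f.step (dfaState f w i.castSucc) (w i) := by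
  unfold dfaState
  have hv : (i.succ : Fin (n + 1)).val = i.val + 1 := rfl
  have hv' : (i.castSucc : Fin (n + 1)).val = i.val := rfl
  rw [hv, hv', List.take_succ]
  have hget : (List.ofFn w)[i.val]? = some (w i) := by
    rw [List.getElem?_eq_getElem (by simp [i.isLt])]
    simp
  rw [hget]
  simp

lemma prod_snd_eq {R : Type*} (M : LTS Q S) (f : DFAc S R) {n : ℕ}
    (qrh : Fin (n + 1) → Q × R) (w : Fin n → S)
    (h0 : qrh 0 ∈ (prodLTS M f).init)
    (hs : ∀ i : Fin n, (qrh i.castSucc, w i, qrh i.succ) ∈ (prodLTS M f).trans) :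
    ∀ i, (qrh i).2 = dfaState f w i := by
  intro i
  induction i using Fin.induction with
  | zero => rw [dfaState_zero]; exact h0.2
  | succ j ih =>
    rw [dfaState_succ, ← ih]
    exact ((hs j).2).symm

lemma sum_mult_dfaCount {R : Type*} [Fintype R] (M : LTS Q S) (f : DFAc S R) (n : ℕ) :
    ∑ w : Fin n → S, mult M n w * dfaCount f w
      = ∑ q : Q × R, alpha (prodLTS M f) {qr | qr.2 ∈ f.accept} n q := by
  classical
  have hR : ∑ q : Q × R, alpha (prodLTS M f) {qr | qr.2 ∈ f.accept} n q
      = ∑ p ∈ pathFinset (prodLTS M f) n,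
          (Finset.univ.filter (fun i : Fin (n + 1) =>
            p.1 i ∈ {qr : Q × R | qr.2 ∈ f.accept})).card := by
    simp only [alpha]
    have h1 := sum_path_fiberwise (prodLTS M f) n (fun _ => 1)
      (fun p => (Finset.univ.filter (fun i : Fin (n + 1) =>
        p.1 i ∈ {qr : Q × R | qr.2 ∈ f.accept})).card)
    simpa using h1.symm
  rw [hR, pathFinset, Finset.sum_filter, Fintype.sum_prod_type, Finset.sum_comm]
  refine Finset.sum_congr rfl fun w _ => ?_
  -- fixed word w
  have hL : mult M n w * dfaCount f w
      = ∑ qh ∈ Finset.univ.filter (fun qh : Fin (n + 1) → Q =>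
          qh 0 ∈ M.init ∧ ∀ i : Fin n, (qh i.castSucc, w i, qh i.succ) ∈ M.trans),
          dfaCount f w := by
    rw [Finset.sum_const, smul_eq_mul, mult]
  rw [hL, ← Finset.sum_filter]
  refine Finset.sum_nbij' (i := fun (qh : Fin (n + 1) → Q) =>
      (fun k => (qh k, dfaState f w k) : Fin (n + 1) → Q × R))
    (j := fun (qrh : Fin (n + 1) → Q × R) => (fun k => (qrh k).1 : Fin (n + 1) → Q))
    ?_ ?_ ?_ ?_ ?_
  · intro qh hqh
    rw [Finset.mem_filter] at hqh ⊢
    refine ⟨Finset.mem_univ _, ⟨hqh.2.1, dfaState_zero f w⟩, fun i => ⟨hqh.2.2 i, ?_⟩⟩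
    exact (dfaState_succ f w i).symm
  · intro qrh hqrh
    rw [Finset.mem_filter] at hqrh ⊢
    exact ⟨Finset.mem_univ _, hqrh.2.1.1, fun i => (hqrh.2.2 i).1⟩
  · intro qh _
    rfl
  · intro qrh hqrh
    rw [Finset.mem_filter] at hqrh
    funext k
    have := prod_snd_eq M f qrh w hqrh.2.1 hqrh.2.2 k
    exact Prod.ext rfl this.symm
  · intro qh _
    rw [dfaCount]
    congr 1


lemma imgF_sum {d : ℕ} {R : Fin d → Type*} [∀ i, Fintype (R i)] (M : LTS Q S)
    (fs : ∀ i, DFAc S (R i)) (n : ℕ) (i : Fin d) :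
    ((imgF M fs n).map (fun t => t i)).sum
      = ∑ w : Fin n → S, mult M n w * dfaCount (fs i) w := by
  rw [imgF]
  have key : ∀ t : Finset (Fin n → S),
      ((∑ w ∈ t, Multiset.replicate (mult M n w)
          (fun j => dfaCount (fs j) w)).map (fun t => t i)).sum
        = ∑ w ∈ t, mult M n w * dfaCount (fs i) w := by
    intro t
    induction t using Finset.induction_on with
    | empty => simp
    | insert _ _ ha ih =>
      rw [Finset.sum_insert ha, Finset.sum_insert ha, ← ih]
      simp [Multiset.map_replicate, Multiset.sum_replicate, smul_eq_mul]
  exact key Finset.univ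

end Aux

open Filter in
/-- Reduction of fitness evaluation to matrix analysis: if `h` conditionally represents
the aggregate `agg` subject to `Ψ`, and `Ψ` holds of every image multiset `img_f(M, n)`,
then `agg (img_f(M,n)) = h((ξ₁^{n+1}v₁)₀, …, (ξ_d^{n+1}v_d)₀)` for every `n`; consequently
the two real sequences have the same limits. -/
theorem stmt_8 {d d' : ℕ} {R : Fin d → Type*} [∀ i, Fintype (R i)] [DecidableEq Q]
    (M : LTS Q S) (fs : ∀ i, DFAc S (R i))
    (agg : Multiset (Fin d → ℕ) → Fin d' → ℚ)
    (h : (Fin d → ℕ) → Fin d' → ℚ)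
    (Ψ : Multiset (Fin d → ℕ) → Prop)
    (hrep : ∀ X, Ψ X → agg X = h (fun i => (X.map (fun t => t i)).sum))
    (hΨ : ∀ n : ℕ, Ψ (imgF M fs n)) :
    (∀ n : ℕ, agg (imgF M fs n) =
        h (fun i =>
          (xi (prodLTS M (fs i)) {qr | qr.2 ∈ (fs i).accept} ^ (n + 1)).mulVec
            (initVec (prodLTS M (fs i)) {qr | qr.2 ∈ (fs i).accept}) (Sum.inl ()))) ∧
    (∀ L : Fin d' → ℝ,
      Tendsto (fun n : ℕ => fun j : Fin d' => ((agg (imgF M fs n) j : ℚ) : ℝ))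
          atTop (nhds L) ↔
      Tendsto (fun n : ℕ => fun j : Fin d' =>
          ((h (fun i =>
              (xi (prodLTS M (fs i)) {qr | qr.2 ∈ (fs i).accept} ^ (n + 1)).mulVec
                (initVec (prodLTS M (fs i)) {qr | qr.2 ∈ (fs i).accept})
                (Sum.inl ())) j : ℚ) : ℝ))
          atTop (nhds L)) := by
  have part1 : ∀ n : ℕ, agg (imgF M fs n) =
      h (fun i =>
        (xi (prodLTS M (fs i)) {qr | qr.2 ∈ (fs i).accept} ^ (n + 1)).mulVec
          (initVec (prodLTS M (fs i)) {qr | qr.2 ∈ (fs i).accept}) (Sum.inl ())) := by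
    intro n
    have harg : (fun i : Fin d => ((imgF M fs n).map (fun t => t i)).sum)
        = (fun i : Fin d =>
            (xi (prodLTS M (fs i)) {qr | qr.2 ∈ (fs i).accept} ^ (n + 1)).mulVec
              (initVec (prodLTS M (fs i)) {qr | qr.2 ∈ (fs i).accept}) (Sum.inl ())) := by
      funext i
      rw [imgF_sum M fs n i, sum_mult_dfaCount M (fs i) n]
      convert (xi_top (prodLTS M (fs i)) {qr | qr.2 ∈ (fs i).accept} n).symm using 2
      congr!
    rw [hrep _ (hΨ n), harg]
  refine ⟨part1, fun L => ?_⟩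
  have heq : (fun n : ℕ => fun j : Fin d' => ((agg (imgF M fs n) j : ℚ) : ℝ))
      = (fun n : ℕ => fun j : Fin d' =>
          ((h (fun i =>
              (xi (prodLTS M (fs i)) {qr | qr.2 ∈ (fs i).accept} ^ (n + 1)).mulVec
                (initVec (prodLTS M (fs i)) {qr | qr.2 ∈ (fs i).accept})
                (Sum.inl ())) j : ℚ) : ℝ)) := by
    funext n j
    rw [part1 n]
  rw [heq]
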